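/- Let u₀ : [0,∞) → [0,∞) be a bounded C² function with u₀(0) = 0, u₀ > 0 on (0,∞), and -u₀'' = f(u₀) on (0,∞), where f : [0,∞) → ℝ is nonnegative, convex, f(0) = 0. Then no such u₀ exists (the hypotheses are contradictory). -/

import Mathlib

open Set Filter

/-- Auxiliary: a function on `[a, ∞)` that is nonnegative there cannot have
derivative `≤ -c < 0` on `(a, ∞)`. -/
lemma stmt18_aux (φ : ℝ → ℝ) (a c : ℝ) (hc : 0 < c)
    (hcont : ContinuousOn φ (Ici a))
    (hd : ∀ x ∈ Ioi a, DifferentiableAt ℝ φ x)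
    (hder : ∀ x ∈ Ioi a, deriv φ x ≤ -c)
    (hlb : ∀ x ∈ Ici a, 0 ≤ φ x) : False := by
  set T := a + φ a / c + 1 with hT
  have hφa : 0 ≤ φ a := hlb a (mem_Ici.2 le_rfl)
  have haT : a < T := by
    have := div_nonneg hφa hc.le
    rw [hT]; linarith
  obtain ⟨x, hx, hslope⟩ := exists_deriv_eq_slope φ haT
    (hcont.mono (Icc_subset_Ici_self))
    (fun y hy => (hd y hy.1).differentiableWithinAt)
  have hx' : x ∈ Ioi a := hx.1
  have h1 : deriv φ x ≤ -c := hder x hx'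
  have h2 : (φ T - φ a) / (T - a) ≤ -c := hslope ▸ h1
  have h3 : 0 < T - a := by linarith
  have h4 : φ T - φ a ≤ -c * (T - a) := by
    rw [div_le_iff₀ h3] at h2; linarith
  have h5 : c * (φ a / c) = φ a := mul_div_cancel₀ _ hc.ne'
  have h6 : 0 ≤ φ T := hlb T haT.le
  have h7 : T - a = φ a / c + 1 := by rw [hT]; ring
  have h8 : -c * (T - a) = -φ a - c := by
    rw [h7, neg_mul, mul_add, h5, mul_one]; ring
  linarith

/-- There is no bounded C² function u₀ : [0,∞) → [0,∞) with u₀(0) = 0,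
u₀ > 0 on (0,∞), solving -u₀'' = f(u₀) on (0,∞) for a nonnegative convex f with
f(0) = 0. -/
theorem stmt18 (f : ℝ → ℝ) (hf : ContinuousOn f (Ici 0))
    (hfnn : ∀ t : ℝ, 0 ≤ t → 0 ≤ f t)
    (hfconv : ConvexOn ℝ (Ici 0) f) (hf0 : f 0 = 0)
    (u₀ : ℝ → ℝ) (hu₀ : ContDiffOn ℝ 2 u₀ (Ici 0))
    (hval : ∀ t ∈ Ici (0:ℝ), 0 ≤ u₀ t)
    (hbdd : ∃ M : ℝ, ∀ t ∈ Ici (0:ℝ), u₀ t ≤ M)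
    (hzero : u₀ 0 = 0)
    (hpos : ∀ t ∈ Ioi (0:ℝ), 0 < u₀ t)
    (hode : ∀ t ∈ Ioi (0:ℝ), - deriv (deriv u₀) t = f (u₀ t)) :
    False := by
  obtain ⟨M, hM⟩ := hbdd
  -- basic regularity on the open half line
  have hC2 : ContDiffOn ℝ 2 u₀ (Ioi 0) := hu₀.mono Ioi_subset_Ici_self
  have hu₀c : ContinuousOn u₀ (Ici 0) := hu₀.continuousOn
  have hu₀d : ∀ x ∈ Ioi (0:ℝ), DifferentiableAt ℝ u₀ x := fun x hx =>
    ((hC2.differentiableOn (by norm_num)) x hx).differentiableAt (isOpen_Ioi.mem_nhds hx)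
  have hder : ContDiffOn ℝ 1 (deriv u₀) (Ioi 0) :=
    hC2.deriv_of_isOpen isOpen_Ioi (by norm_num)
  have hvc : ContinuousOn (deriv u₀) (Ioi 0) := hder.continuousOn
  have hvd : ∀ x ∈ Ioi (0:ℝ), DifferentiableAt ℝ (deriv u₀) x := fun x hx =>
    ((hder.differentiableOn (by norm_num)) x hx).differentiableAt (isOpen_Ioi.mem_nhds hx)
  -- f is monotone on [0, ∞)
  have hfmono : ∀ a b : ℝ, 0 ≤ a → a ≤ b → f a ≤ f b := by
    intro a b ha hab
    rcases eq_or_lt_of_le hab with rfl | hab'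
    · exact le_rfl
    have hb : 0 < b := lt_of_le_of_lt ha hab'
    have h1 : (0:ℝ) ≤ a / b := div_nonneg ha hb.le
    have h2 : a / b ≤ 1 := (div_le_one hb).2 hab
    have key := hfconv.2 (self_mem_Ici (a := (0:ℝ))) (mem_Ici.2 hb.le)
      (by linarith : (0:ℝ) ≤ 1 - a / b) h1 (by ring)
    have heq : (1 - a / b) • (0:ℝ) + (a / b) • b = a := by
      rw [smul_eq_mul, smul_eq_mul, mul_zero, zero_add, div_mul_cancel₀ a hb.ne']
    rw [heq] at key
    have hfb : 0 ≤ f b := hfnn b hb.le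
    simp only [smul_eq_mul, hf0, mul_zero, zero_add] at key
    nlinarith
  -- u₀'' ≤ 0 on (0, ∞)
  have hdd_nonpos : ∀ t ∈ Ioi (0:ℝ), deriv (deriv u₀) t ≤ 0 := by
    intro t ht
    have h1 := hode t ht
    have h2 := hfnn (u₀ t) (hval t (mem_Ici.2 (le_of_lt ht)))
    linarith
  -- u₀' is antitone on (0, ∞)
  have hvanti : AntitoneOn (deriv u₀) (Ioi 0) := by
    apply antitoneOn_of_deriv_nonpos (convex_Ioi 0) hvc
    · rw [interior_Ioi]
      exact fun x hx => (hvd x hx).differentiableWithinAt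
    · rw [interior_Ioi]; exact hdd_nonpos
  -- u₀' ≥ 0 on (0, ∞)
  have hvnn : ∀ t ∈ Ioi (0:ℝ), 0 ≤ deriv u₀ t := by
    intro t₀ ht₀
    by_contra h
    push_neg at h
    have hε : 0 < -deriv u₀ t₀ := by linarith
    have hsub : Ici t₀ ⊆ Ici 0 := Ici_subset_Ici.2 (le_of_lt ht₀)
    have hsub' : Ioi t₀ ⊆ Ioi 0 := Ioi_subset_Ioi (le_of_lt ht₀)
    refine stmt18_aux u₀ t₀ (-deriv u₀ t₀) hε (hu₀c.mono hsub)
      (fun x hx => hu₀d x (hsub' hx)) ?_ (fun x hx => hval x (hsub hx))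
    intro x hx
    have : deriv u₀ x ≤ deriv u₀ t₀ := hvanti ht₀ (hsub' hx) (le_of_lt hx)
    linarith
  -- u₀ is monotone on (0, ∞)
  have humono : MonotoneOn u₀ (Ioi 0) := by
    apply monotoneOn_of_deriv_nonneg (convex_Ioi 0) (hu₀c.mono Ioi_subset_Ici_self)
    · rw [interior_Ioi]
      exact fun x hx => (hu₀d x hx).differentiableWithinAt
    · rw [interior_Ioi]; exact hvnn
  -- f(u₀ t) = 0 for all t > 0
  have hfu0 : ∀ t ∈ Ioi (0:ℝ), f (u₀ t) = 0 := by
    intro t₀ ht₀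
    by_contra h
    have hδ : 0 < f (u₀ t₀) := lt_of_le_of_ne (hfnn _ (hval t₀ (mem_Ici.2 (le_of_lt ht₀)))) (Ne.symm h)
    have hsub : Ici t₀ ⊆ Ioi 0 := fun x hx => mem_Ioi.2 (lt_of_lt_of_le ht₀ hx)
    have hsub' : Ioi t₀ ⊆ Ioi 0 := Ioi_subset_Ioi (le_of_lt ht₀)
    refine stmt18_aux (deriv u₀) t₀ (f (u₀ t₀)) hδ (hvc.mono hsub)
      (fun x hx => hvd x (hsub' hx)) ?_ (fun x hx => hvnn x (hsub hx))
    intro x hx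
    have hmem : x ∈ Ioi (0:ℝ) := hsub' hx
    have h1 : u₀ t₀ ≤ u₀ x := humono ht₀ hmem (le_of_lt hx)
    have h2 : f (u₀ t₀) ≤ f (u₀ x) := hfmono _ _ (hval t₀ (mem_Ici.2 (le_of_lt ht₀))) h1
    have h3 := hode x hmem
    linarith
  -- hence u₀'' = 0 on (0, ∞), so u₀' is also monotone
  have hdd0 : ∀ t ∈ Ioi (0:ℝ), 0 ≤ deriv (deriv u₀) t := by
    intro t ht
    have := hode t ht
    rw [hfu0 t ht] at this
    linarith
  have hvmono : MonotoneOn (deriv u₀) (Ioi 0) := by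
    apply monotoneOn_of_deriv_nonneg (convex_Ioi 0) hvc
    · rw [interior_Ioi]
      exact fun x hx => (hvd x hx).differentiableWithinAt
    · rw [interior_Ioi]; exact hdd0
  -- MVT on [0,1] gives a point with derivative u₀ 1 > 0
  obtain ⟨c, hc, hcslope⟩ := exists_deriv_eq_slope u₀ (by norm_num : (0:ℝ) < 1)
    (hu₀c.mono (Icc_subset_Ici_self))
    (fun y hy => (hu₀d y hy.1).differentiableWithinAt)
  have hα : 0 < u₀ 1 := hpos 1 (by norm_num)
  have hcderiv : deriv u₀ c = u₀ 1 := by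
    rw [hcslope, hzero]; ring
  -- now u₀ grows at least linearly beyond c, contradicting boundedness
  have hc0 : c ∈ Ioi (0:ℝ) := hc.1
  have hsub : Ici c ⊆ Ici 0 := Ici_subset_Ici.2 (le_of_lt hc0)
  have hsub' : Ioi c ⊆ Ioi 0 := Ioi_subset_Ioi (le_of_lt hc0)
  refine stmt18_aux (fun t => M - u₀ t) c (u₀ 1) hα
    ((continuousOn_const.sub (hu₀c.mono hsub)))
    (fun x hx => (differentiable_const M).differentiableAt.sub (hu₀d x (hsub' hx))) ?_
    (fun x hx => by simp only [sub_nonneg]; exact hM x (hsub hx))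
  intro x hx
  have h1 : deriv (fun t => M - u₀ t) x = -deriv u₀ x := by
    rw [deriv_const_sub]
  have h2 : u₀ 1 ≤ deriv u₀ x := by
    rw [← hcderiv]
    exact hvmono hc0 (hsub' hx) (le_of_lt hx)
  rw [h1]; linarith
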